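/- Assume: (i) for each x ∈ I and 0 ≤ i ≤ L the partial derivative ∂_x^i F(x,y) exists for all y ∈ B and y ↦ ∂_x^i F(x,y) is integrable on B; (ii) the function 𝓘(x) = ∫_B F(x,y) dy is L times differentiable on I with 𝓘^{(i)}(x) = ∫_B ∂_x^i F(x,y) dy for all x ∈ I and 0 ≤ i ≤ L; (iii) for each x ∈ I, every G_j(x,·) is continuous on B, differentiable at every point of the interior of B, and y ↦ ∑_{j=1}^{d} ∂_{y_j} G_j(x,y) is integrable on B; (iv) for every x ∈ I and every y in the interior of B, ∑_{i=0}^{L} e_i(x)·∂_x^i F(x,y) = ∑_{j=1}^{d} ∂_{y_j} G_j(x,y). Then for every x ∈ I, ∑_{i=0}^{L} e_i(x)·𝓘^{(i)}(x) = ∑_{j=1}^{d} (1/(o_j − u_j))·∫_B [ G_j(x, y[j ↦ o_j]) − G_j(x, y[j ↦ u_j]) ] dy, where y[j ↦ c] denotes y with its j-th coordinate replaced by c; i.e., 𝓘 satisfies an inhomogeneous linear ODE whose right-hand side is a sum of 2d integrals of dimension d−1. -/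

import Mathlib

open MeasureTheory

lemma box_slice_integral {n : ℕ} (u o : Fin (n + 1) → ℝ) (huo : ∀ j, u j < o j)
    (g : (Fin (n + 1) → ℝ) → ℝ) (j : Fin (n + 1)) (c : ℝ) :
    ∫ y in Set.Icc u o, g (Function.update y j c)
      = (o j - u j) *
        ∫ z in Set.Icc (u ∘ j.succAbove) (o ∘ j.succAbove), g (j.insertNth c z) := by
  set T := MeasurableEquiv.piFinSuccAbove (fun _ : Fin (n + 1) => ℝ) j with hT
  have hMP : MeasurePreserving T.symm volume volume :=
    (volume_preserving_piFinSuccAbove (fun _ : Fin (n + 1) => ℝ) j).symm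
  have hTsymm : ∀ p : ℝ × (Fin n → ℝ), T.symm p = j.insertNth p.1 p.2 := fun p => rfl
  have hupins : ∀ (t : ℝ) (z : Fin n → ℝ),
      Function.update (j.insertNth t z : Fin (n + 1) → ℝ) j c = j.insertNth c z := by
    intro t z
    funext k
    refine Fin.succAboveCases j ?_ ?_ k
    · simp
    · intro k
      simp [Function.update_of_ne (j.succAbove_ne k)]
  have hpre : T.symm ⁻¹' (Set.Icc u o)
      = Set.Icc (u j) (o j) ×ˢ Set.Icc (u ∘ j.succAbove) (o ∘ j.succAbove) := by
    ext p
    simp only [Set.mem_preimage, hTsymm, Set.mem_Icc, Set.mem_prod, Pi.le_def]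
    constructor
    · intro ⟨h1, h2⟩
      refine ⟨⟨by simpa using h1 j, by simpa using h2 j⟩, fun k => by simpa using h1 (j.succAbove k),
        fun k => by simpa using h2 (j.succAbove k)⟩
    · rintro ⟨⟨h1, h2⟩, h3, h4⟩
      constructor <;> intro k <;>
        refine Fin.succAboveCases j (by simpa) (fun i => by simpa using (by first | exact h3 i | exact h4 i : _)) k
  have key : ∫ y in Set.Icc u o, g (Function.update y j c)
      = ∫ p in Set.Icc (u j) (o j) ×ˢ Set.Icc (u ∘ j.succAbove) (o ∘ j.succAbove),
          g (j.insertNth c p.2) := by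
    rw [← hMP.setIntegral_preimage_emb T.symm.measurableEmbedding
      (fun y => g (Function.update y j c)) (Set.Icc u o), hpre]
    refine setIntegral_congr_fun (by measurability) fun p _ => ?_
    rw [hTsymm, hupins]
  rw [key, Measure.volume_eq_prod, ← Measure.prod_restrict,
    integral_fun_snd (fun z => g (j.insertNth c z))]
  rw [measureReal_restrict_apply_univ, Real.volume_real_Icc_of_le (huo j).le, smul_eq_mul]

/-- If the integrand satisfies the continuous Almkvist–Zeilberger integrand differential
equation, then the parametric integral satisfies an inhomogeneous linear ODE whose
right-hand side is a sum of `2d` boundary integrals of dimension `d - 1`. -/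
theorem parametric_box_integral_inhomogeneous_ODE
    (d L : ℕ) (hd : 1 ≤ d)
    (I : Set ℝ) (hIopen : IsOpen I) (hIconn : I.OrdConnected)
    (u o : Fin d → ℝ) (huo : ∀ j, u j < o j)
    (e : Fin (L + 1) → ℝ → ℝ)
    (F : ℝ → (Fin d → ℝ) → ℝ)
    (G : Fin d → ℝ → (Fin d → ℝ) → ℝ)
    (𝓘 : ℝ → ℝ) (h𝓘 : ∀ x, 𝓘 x = ∫ y in Set.Icc u o, F x y)
    (hFsmooth : ∀ x ∈ I, ∀ y ∈ Set.Icc u o, ContDiffAt ℝ L (fun τ : ℝ => F τ y) x)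
    (hFint : ∀ x ∈ I, ∀ i ≤ L,
      IntegrableOn (fun y => iteratedDeriv i (fun τ : ℝ => F τ y) x) (Set.Icc u o) volume)
    (h𝓘smooth : ∀ x ∈ I, ContDiffAt ℝ L 𝓘 x)
    (h𝓘deriv : ∀ x ∈ I, ∀ i ≤ L,
      iteratedDeriv i 𝓘 x = ∫ y in Set.Icc u o, iteratedDeriv i (fun τ : ℝ => F τ y) x)
    (hGcont : ∀ j, ∀ x ∈ I, ContinuousOn (G j x) (Set.Icc u o))
    (hGdiff : ∀ j, ∀ x ∈ I, ∀ y ∈ interior (Set.Icc u o), DifferentiableAt ℝ (G j x) y)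
    (hdiv : ∀ x ∈ I, IntegrableOn
      (fun y => ∑ j : Fin d, fderiv ℝ (G j x) y (Pi.single j (1 : ℝ))) (Set.Icc u o) volume)
    (heq : ∀ x ∈ I, ∀ y ∈ interior (Set.Icc u o),
      ∑ i : Fin (L + 1), e i x * iteratedDeriv (i : ℕ) (fun τ : ℝ => F τ y) x
        = ∑ j : Fin d, fderiv ℝ (G j x) y (Pi.single j (1 : ℝ))) :
    ∀ x ∈ I, ∑ i : Fin (L + 1), e i x * iteratedDeriv (i : ℕ) 𝓘 x
      = ∑ j : Fin d, (1 / (o j - u j)) *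
          ∫ y in Set.Icc u o,
            (G j x (Function.update y j (o j)) - G j x (Function.update y j (u j))) := by
  obtain ⟨n, rfl⟩ : ∃ n, d = n + 1 := ⟨d - 1, (Nat.succ_pred_eq_of_pos hd).symm⟩
  intro x hx
  have hleuo : u ≤ o := fun j => (huo j).le
  have hIccInt : interior (Set.Icc u o) = Set.pi Set.univ fun j => Set.Ioo (u j) (o j) := by
    rw [← Set.pi_univ_Icc, interior_pi_set Set.finite_univ]
    simp [Function.comp]
  have hnull : volume (Set.Icc u o \ interior (Set.Icc u o)) = 0 := by
    have hfin : volume (interior (Set.Icc u o)) ≠ ⊤ :=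
      ((measure_mono interior_subset).trans_lt
        (by rw [Real.volume_Icc_pi]; exact ENNReal.prod_lt_top fun j _ => ENNReal.ofReal_lt_top)).ne
    rw [measure_diff interior_subset measurableSet_interior.nullMeasurableSet hfin,
      Real.volume_Icc_pi, hIccInt, volume_pi_pi]
    simp [Real.volume_Ioo]
  -- Step 1: rewrite the LHS as a single integral
  have hstep1 : ∑ i : Fin (L + 1), e i x * iteratedDeriv (i : ℕ) 𝓘 x
      = ∫ y in Set.Icc u o,
          ∑ i : Fin (L + 1), e i x * iteratedDeriv (i : ℕ) (fun τ : ℝ => F τ y) x := by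
    have hsum := integral_finset_sum (μ := volume.restrict (Set.Icc u o)) Finset.univ
      (f := fun (i : Fin (L + 1)) (y : Fin (n + 1) → ℝ) =>
        e i x * iteratedDeriv (i : ℕ) (fun τ : ℝ => F τ y) x)
      (fun i _ => (hFint x hx i (Nat.lt_succ_iff.mp i.isLt)).const_mul (e i x))
    rw [hsum]
    refine Finset.sum_congr rfl fun i _ => ?_
    rw [h𝓘deriv x hx i (Nat.lt_succ_iff.mp i.isLt)]
    exact (integral_const_mul _ _).symm
  -- Step 2: a.e. congruence to the divergence
  have hstep2 : ∫ y in Set.Icc u o,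
        ∑ i : Fin (L + 1), e i x * iteratedDeriv (i : ℕ) (fun τ : ℝ => F τ y) x
      = ∫ y in Set.Icc u o, ∑ j : Fin (n + 1), fderiv ℝ (G j x) y (Pi.single j (1 : ℝ)) := by
    refine setIntegral_congr_ae measurableSet_Icc ?_
    have h0 : ∀ᵐ y : Fin (n + 1) → ℝ,
        y ∉ Set.Icc u o \ interior (Set.Icc u o) := by
      rw [ae_iff]
      simpa only [not_not, Set.setOf_mem_eq] using hnull
    filter_upwards [h0] with y hy hyIcc
    by_cases h : y ∈ interior (Set.Icc u o)
    · exact heq x hx y h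
    · exact absurd ⟨hyIcc, h⟩ hy
  -- Step 3: divergence theorem
  have hdivthm := integral_divergence_of_hasFDerivAt_off_countable' u o hleuo
      (fun j y => G j x y) (fun j y => fderiv ℝ (G j x) y) ∅ Set.countable_empty
      (fun j => hGcont j x hx)
      (fun y hy j => (hGdiff j x hx y (by rw [hIccInt]; exact hy.1)).hasFDerivAt)
      (hdiv x hx)
  -- Step 4: identify the boundary integrals
  have hface : ∀ j : Fin (n + 1), (1 / (o j - u j)) *
        (∫ y in Set.Icc u o,
          (G j x (Function.update y j (o j)) - G j x (Function.update y j (u j))))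
      = (∫ z in Set.Icc (u ∘ j.succAbove) (o ∘ j.succAbove), G j x (j.insertNth (o j) z))
        - ∫ z in Set.Icc (u ∘ j.succAbove) (o ∘ j.succAbove), G j x (j.insertNth (u j) z) := by
    intro j
    have hne : o j - u j ≠ 0 := sub_ne_zero.2 (huo j).ne'
    have hint : ∀ c ∈ Set.Icc (u j) (o j),
        IntegrableOn (fun y => G j x (Function.update y j c)) (Set.Icc u o) volume := by
      intro c hc
      refine (((hGcont j x hx).comp
        ((continuous_id.update j continuous_const).continuousOn) ?_)).integrableOn_compact
        isCompact_Icc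
      intro y hy
      rw [Set.mem_Icc] at hy ⊢
      constructor <;> intro k
      · rcases eq_or_ne k j with rfl | hk
        · simpa using hc.1
        · simpa [Function.update_of_ne hk] using hy.1 k
      · rcases eq_or_ne k j with rfl | hk
        · simpa using hc.2
        · simpa [Function.update_of_ne hk] using hy.2 k
    rw [integral_sub (hint (o j) ⟨(huo j).le, le_refl _⟩) (hint (u j) ⟨le_refl _, (huo j).le⟩),
      box_slice_integral u o huo (G j x) j (o j), box_slice_integral u o huo (G j x) j (u j)]
    field_simp
  calc ∑ i : Fin (L + 1), e i x * iteratedDeriv (i : ℕ) 𝓘 x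
      = ∫ y in Set.Icc u o,
          ∑ j : Fin (n + 1), fderiv ℝ (G j x) y (Pi.single j (1 : ℝ)) := by
        rw [hstep1, hstep2]
    _ = ∑ j : Fin (n + 1),
          ((∫ z in Set.Icc (u ∘ j.succAbove) (o ∘ j.succAbove), G j x (j.insertNth (o j) z))
            - ∫ z in Set.Icc (u ∘ j.succAbove) (o ∘ j.succAbove), G j x (j.insertNth (u j) z)) :=
        hdivthm
    _ = ∑ j : Fin (n + 1), (1 / (o j - u j)) *
          ∫ y in Set.Icc u o,
            (G j x (Function.update y j (o j)) - G j x (Function.update y j (u j))) :=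
        (Finset.sum_congr rfl fun j _ => (hface j).symm)
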